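/- Let n, k be positive integers with k + 1 < n and p = k/n. Then (n/(n+1))·P(Bin(n+1,p) > k+1) ≥ P(Bin(n,p) > k+1). -/

import Mathlib

open Finset

/-- The probability that a binomial random variable with parameters `n`, `p`
takes the value `j`. -/
noncomputable def binomPMF (n : ℕ) (p : ℝ) (j : ℕ) : ℝ :=
  (n.choose j : ℝ) * p ^ j * (1 - p) ^ (n - j)

lemma binomPMF_nonneg (n : ℕ) (p : ℝ) (hp0 : 0 ≤ p) (hp1 : p ≤ 1) (j : ℕ) :
    0 ≤ binomPMF n p j := by
  have : 0 ≤ 1 - p := by linarith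
  unfold binomPMF; positivity

/-- Pascal-style recursion. -/
lemma binomPMF_pascal (n : ℕ) (p : ℝ) (i : ℕ) (hi : i ≤ n) :
    binomPMF (n + 1) p (i + 1) = p * binomPMF n p i + (1 - p) * binomPMF n p (i + 1) := by
  unfold binomPMF
  rcases eq_or_lt_of_le hi with rfl | hlt
  · simp [Nat.choose_succ_succ, Nat.choose_succ_self]
    ring
  · have h1 : n + 1 - (i + 1) = n - i := by omega
    have h2 : n - i = (n - (i + 1)) + 1 := by omega
    rw [Nat.choose_succ_succ, h1, h2]
    push_cast
    ring

/-- Ratio bound: for `k+1 ≤ j < n`, each successive term shrinks by factor `k/(k+2)`. -/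
lemma binomPMF_ratio (n k : ℕ) (hk : 1 ≤ k) (hkn : k + 1 < n)
    (p : ℝ) (hp : p = (k : ℝ) / (n : ℝ)) (j : ℕ) (hj : k + 1 ≤ j) (hjn : j < n) :
    binomPMF n p (j + 1) ≤ ((k : ℝ) / ((k:ℝ) + 2)) * binomPMF n p j := by
  have hn0 : (0:ℝ) < n := by exact_mod_cast (by omega : 0 < n)
  have hkr : (1:ℝ) ≤ k := by exact_mod_cast hk
  have hknr : (k:ℝ) + 1 < n := by exact_mod_cast hkn
  have hp0 : 0 ≤ p := by rw [hp]; positivity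
  have hp1 : p ≤ 1 := by
    rw [hp, div_le_one hn0]; exact_mod_cast (by omega : k ≤ n)
  have hq : 1 - p = ((n:ℝ) - k) / n := by
    rw [hp]; field_simp
  have hq0 : (0:ℝ) < 1 - p := by
    rw [hq]; apply div_pos (by linarith) hn0
  have hB : 0 ≤ binomPMF n p j := binomPMF_nonneg n p hp0 hp1 j
  have hjr : (k:ℝ) + 1 ≤ j := by exact_mod_cast hj
  have hjn' : (j:ℝ) + 1 ≤ n := by exact_mod_cast hjn
  -- key identity
  have hid : ((j:ℝ) + 1) * (1 - p) * binomPMF n p (j + 1)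
      = ((n:ℝ) - j) * p * binomPMF n p j := by
    unfold binomPMF
    have h2 : n - j = (n - (j + 1)) + 1 := by omega
    have hch : ((n.choose (j+1) : ℝ)) * ((j:ℝ) + 1) = (n.choose j : ℝ) * ((n:ℝ) - j) := by
      have h := Nat.choose_succ_right_eq n j
      have hcast : ((n - j : ℕ) : ℝ) = (n:ℝ) - j := Nat.cast_sub (le_of_lt hjn)
      calc ((n.choose (j+1) : ℝ)) * ((j:ℝ) + 1) = ((n.choose (j+1) * (j+1) : ℕ) : ℝ) := by
            push_cast; ring
        _ = ((n.choose j * (n - j) : ℕ) : ℝ) := by rw [h]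
        _ = (n.choose j : ℝ) * ((n:ℝ) - j) := by rw [Nat.cast_mul, hcast]
    rw [h2, pow_succ]
    linear_combination (p ^ j * p * (1 - p) ^ (n - (j + 1)) * (1 - p)) * hch
  have hnum : ((n:ℝ) - j) * p ≤ ((k:ℝ)/((k:ℝ)+2)) * (((j:ℝ) + 1) * (1 - p)) := by
    have hn' : (n:ℝ) ≠ 0 := ne_of_gt hn0
    have h2 : ((k:ℝ)+2) ≠ 0 := by positivity
    rw [hq, hp,
      show ((n:ℝ) - (j:ℝ)) * ((k:ℝ)/(n:ℝ)) = (((n:ℝ)-(j:ℝ))*(k:ℝ))/(n:ℝ) from by ring,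
      show (k:ℝ)/((k:ℝ)+2) * (((j:ℝ)+1)*(((n:ℝ)-(k:ℝ))/(n:ℝ)))
          = ((k:ℝ)*(((j:ℝ)+1)*((n:ℝ)-(k:ℝ))))/((n:ℝ)*((k:ℝ)+2)) from by
        rw [eq_div_iff (mul_ne_zero hn' h2)]
        field_simp,
      div_le_div_iff₀ hn0 (by positivity)]
    have key : ((n:ℝ)-(j:ℝ))*((k:ℝ)+2) ≤ ((j:ℝ)+1)*((n:ℝ)-(k:ℝ)) := by
      nlinarith [mul_nonneg hn0.le (show (0:ℝ) ≤ (j:ℝ)-(k:ℝ)-1 by linarith)]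
    nlinarith [mul_le_mul_of_nonneg_left key
      (mul_nonneg (le_of_lt hn0) (by linarith : (0:ℝ) ≤ (k:ℝ)))]
  have hpos : (0:ℝ) < ((j:ℝ) + 1) * (1 - p) := by positivity
  rw [← mul_le_mul_iff_right₀ hpos]
  calc ((j:ℝ) + 1) * (1 - p) * binomPMF n p (j + 1)
      = ((n:ℝ) - j) * p * binomPMF n p j := hid
    _ ≤ (((k:ℝ)/((k:ℝ)+2)) * (((j:ℝ) + 1) * (1 - p))) * binomPMF n p j :=
        mul_le_mul_of_nonneg_right hnum hB
    _ = ((j:ℝ) + 1) * (1 - p) * (((k:ℝ)/((k:ℝ)+2)) * binomPMF n p j) := by ring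

lemma binomPMF_geom (n k : ℕ) (hk : 1 ≤ k) (hkn : k + 1 < n)
    (p : ℝ) (hp : p = (k : ℝ) / (n : ℝ)) (i : ℕ) (hi : k + 1 + i ≤ n) :
    binomPMF n p (k + 1 + i) ≤ ((k : ℝ)/((k:ℝ)+2))^i * binomPMF n p (k+1) := by
  induction i with
  | zero => simp
  | succ m ih =>
    have hm : k + 1 + m ≤ n := by omega
    have h1 := binomPMF_ratio n k hk hkn p hp (k+1+m) (by omega) (by omega)
    have hr0 : (0:ℝ) ≤ (k:ℝ)/((k:ℝ)+2) := by positivity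
    have he : k + 1 + (m+1) = (k+1+m) + 1 := by omega
    rw [he]
    calc binomPMF n p ((k+1+m) + 1)
        ≤ ((k:ℝ)/((k:ℝ)+2)) * binomPMF n p (k+1+m) := h1
      _ ≤ ((k:ℝ)/((k:ℝ)+2)) * (((k:ℝ)/((k:ℝ)+2))^m * binomPMF n p (k+1)) :=
          mul_le_mul_of_nonneg_left (ih hm) hr0
      _ = ((k:ℝ)/((k:ℝ)+2))^(m+1) * binomPMF n p (k+1) := by ring

lemma tail_le (n k : ℕ) (hk : 1 ≤ k) (hkn : k + 1 < n)
    (p : ℝ) (hp : p = (k : ℝ) / (n : ℝ)) :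
    ∑ j ∈ Finset.Icc (k + 2) n, binomPMF n p j ≤ ((k:ℝ)/2) * binomPMF n p (k+1) := by
  set r : ℝ := (k:ℝ)/((k:ℝ)+2) with hr
  have hkr : (1:ℝ) ≤ k := by exact_mod_cast hk
  have hr0 : (0:ℝ) ≤ r := by positivity
  have hb : 0 ≤ binomPMF n p (k+1) := by
    apply binomPMF_nonneg
    · rw [hp]; positivity
    · rw [hp, div_le_one (by exact_mod_cast (by omega : 0 < n))]
      exact_mod_cast (by omega : k ≤ n)
  set M := n - (k+1) with hM
  have hre : ∑ j ∈ Finset.Icc (k + 2) n, binomPMF n p j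
      = ∑ i ∈ range M, binomPMF n p (k + 1 + (i+1)) := by
    rw [← Finset.Ico_add_one_right_eq_Icc, Finset.sum_Ico_eq_sum_range,
      show n + 1 - (k+2) = M from by omega]
    apply Finset.sum_congr rfl
    intro i _; congr 1; omega
  rw [hre]
  have hstep : ∑ i ∈ range M, binomPMF n p (k + 1 + (i+1))
      ≤ ∑ i ∈ range M, r^(i+1) * binomPMF n p (k+1) := by
    apply Finset.sum_le_sum
    intro i hi
    exact binomPMF_geom n k hk hkn p hp (i+1) (by simp [hM] at hi ⊢; omega)
  refine hstep.trans ?_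
  have hgs : ∑ i ∈ range M, r^(i+1) * binomPMF n p (k+1)
      = (∑ i ∈ range M, r^i) * (r * binomPMF n p (k+1)) := by
    rw [Finset.sum_mul]
    apply Finset.sum_congr rfl
    intro i _; ring
  rw [hgs]
  have hgeo : (∑ i ∈ range M, r^i) ≤ ((k:ℝ)+2)/2 := by
    have h := geom_sum_mul r M
    have hpow : 0 ≤ r^M := pow_nonneg hr0 M
    have h1 : (∑ i ∈ range M, r^i) * (1 - r) ≤ 1 := by nlinarith
    have h1r : (1 - r) * ((k:ℝ)+2) = 2 := by
      rw [hr]; field_simp; ring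
    nlinarith [mul_le_mul_of_nonneg_right h1 (show (0:ℝ) ≤ (k:ℝ)+2 by positivity)]
  calc (∑ i ∈ range M, r^i) * (r * binomPMF n p (k+1))
      ≤ (((k:ℝ)+2)/2) * (r * binomPMF n p (k+1)) :=
        mul_le_mul_of_nonneg_right hgeo (by positivity)
    _ = ((k:ℝ)/2) * binomPMF n p (k+1) := by
        rw [hr]; field_simp

/-- For `p = k/n` with `1 ≤ k` and `k + 1 < n`,
`(n/(n+1))·P(Bin(n+1,p) > k+1) ≥ P(Bin(n,p) > k+1)`. -/
theorem shift_binomial_tail (n k : ℕ) (hk : 1 ≤ k) (hkn : k + 1 < n)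
    (p : ℝ) (hp : p = (k : ℝ) / (n : ℝ)) :
    ((n : ℝ) / ((n : ℝ) + 1))
        * ∑ j ∈ Finset.Icc (k + 2) (n + 1), binomPMF (n + 1) p j
      ≥ ∑ j ∈ Finset.Icc (k + 2) n, binomPMF n p j := by
  have hn0 : (0:ℝ) < n := by exact_mod_cast (by omega : 0 < n)
  have hkr : (1:ℝ) ≤ k := by exact_mod_cast hk
  have hp0 : 0 ≤ p := by rw [hp]; positivity
  have hp1 : p ≤ 1 := by
    rw [hp, div_le_one hn0]; exact_mod_cast (by omega : k ≤ n)
  set T : ℝ := ∑ j ∈ Finset.Icc (k + 2) n, binomPMF n p j with hT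
  set b : ℝ := binomPMF n p (k+1) with hbdef
  have hb : 0 ≤ b := binomPMF_nonneg n p hp0 hp1 (k+1)
  have hTb : T ≤ ((k:ℝ)/2) * b := tail_le n k hk hkn p hp
  -- rewrite the (n+1)-sum
  have hps : ∀ j ∈ Finset.Icc (k+2) (n+1),
      binomPMF (n+1) p j = p * binomPMF n p (j-1) + (1-p) * binomPMF n p j := by
    intro j hj
    rw [Finset.mem_Icc] at hj
    obtain ⟨i, rfl⟩ : ∃ i, j = i + 1 := ⟨j - 1, by omega⟩
    simp only [Nat.add_sub_cancel]
    exact binomPMF_pascal n p i (by omega)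
  rw [Finset.sum_congr rfl hps, Finset.sum_add_distrib, ← Finset.mul_sum, ← Finset.mul_sum]
  have hS1 : ∑ j ∈ Finset.Icc (k+2) (n+1), binomPMF n p (j-1) = b + T := by
    have e1 : ∑ j ∈ Finset.Icc (k+2) (n+1), binomPMF n p (j-1)
        = ∑ j ∈ Finset.Icc (k+1) n, binomPMF n p j := by
      rw [← Finset.Ico_add_one_right_eq_Icc, Finset.sum_Ico_eq_sum_range,
        ← Finset.Ico_add_one_right_eq_Icc (k+1) n, Finset.sum_Ico_eq_sum_range,
        show n + 1 + 1 - (k+2) = n + 1 - (k+1) from by omega]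
      apply Finset.sum_congr rfl
      intro i _; congr 1; omega
    have e2 : Finset.Icc (k+1) n = insert (k+1) (Finset.Icc (k+2) n) := by
      ext x; simp only [Finset.mem_Icc, Finset.mem_insert]; omega
    rw [e1, e2, Finset.sum_insert (by simp)]
  have hS2 : ∑ j ∈ Finset.Icc (k+2) (n+1), binomPMF n p j = T := by
    rw [Finset.sum_Icc_succ_top (by omega : k + 2 ≤ n + 1)]
    have : binomPMF n p (n+1) = 0 := by
      simp [binomPMF, Nat.choose_eq_zero_of_lt (by omega : n < n + 1)]
    rw [this, add_zero]
  rw [hS1, hS2]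
  have hpn : p * n = k := by rw [hp]; field_simp
  rw [ge_iff_le, ← sub_nonneg]
  have hkey : (n:ℝ) / ((n:ℝ) + 1) * (p * (b + T) + (1 - p) * T) - T
      = (p * n * b - T) / ((n:ℝ) + 1) := by
    field_simp
    ring
  rw [hkey]
  apply div_nonneg _ (by positivity)
  rw [hpn]
  nlinarith [hb, hTb, hkr]
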